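/- Let 0 < λ₁ < λ₂, ε₀ > 0, ρ > 0, and suppose λ₁(1+ε₀) ≠ λ₂. For β ∈ (ε₀/(1+ε₀), 1), define A(β) = ε₀/(ρ(β−(1−β)ε₀)), B(β) = ε₀/(ρ(1−β)), and F(β) = 1 − exp(−(λ₂A(β) + λ₁·max(A(β),B(β)))). Then β* = [√(1+ε₀)·(ε₀λ₁−λ₂) + √(λ₁λ₂)] / [√(1+ε₀)·(λ₁(1+ε₀)−λ₂)] lies in (ε₀/(1+ε₀), 1) and is a global minimizer of F on (ε₀/(1+ε₀), 1), i.e., F(β*) ≤ F(β) for all β ∈ (ε₀/(1+ε₀), 1). -/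

import Mathlib

open Real Set

/-- Corollary 2 (optimal dynamic power allocation for downlink NOMA): for `0 < l₁ < l₂`,
target SNR `ε₀ > 0`, SNR `ρ > 0` with `l₁(1+ε₀) ≠ l₂`, the common outage probability
`F(β) = 1 - exp(-(l₂ A(β) + l₁ max(A(β), B(β))))` on `(ε₀/(1+ε₀), 1)`, with
`A(β) = ε₀/(ρ(β-(1-β)ε₀))` and `B(β) = ε₀/(ρ(1-β))`, is globally minimized at
`β* = (√(1+ε₀)(ε₀l₁-l₂) + √(l₁l₂)) / (√(1+ε₀)(l₁(1+ε₀)-l₂))`, which lies in the interval. -/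
lemma noma_basic_ineq (u w c d : ℝ) (hu : 0 < u) (hw : 0 < w) (huw : u + w = 1) :
    (c + d) ^ 2 ≤ c ^ 2 / u + d ^ 2 / w := by
  have hw' : w = 1 - u := by linarith
  subst hw'
  rw [div_add_div _ _ hu.ne' hw.ne', le_div_iff₀ (mul_pos hu hw)]
  nlinarith [sq_nonneg (c * (1 - u) - d * u)]

set_option maxHeartbeats 2000000 in
theorem downlink_noma_optimal_power_allocation
    (l₁ l₂ ε₀ ρ : ℝ) (hl₁ : 0 < l₁) (hl₁₂ : l₁ < l₂) (hε₀ : 0 < ε₀) (hρ : 0 < ρ)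
    (hne : l₁ * (1 + ε₀) ≠ l₂)
    (A B F : ℝ → ℝ)
    (hA : ∀ β, A β = ε₀ / (ρ * (β - (1 - β) * ε₀)))
    (hB : ∀ β, B β = ε₀ / (ρ * (1 - β)))
    (hF : ∀ β, F β = 1 - Real.exp (-(l₂ * A β + l₁ * max (A β) (B β))))
    (βs : ℝ)
    (hβs : βs = (Real.sqrt (1 + ε₀) * (ε₀ * l₁ - l₂) + Real.sqrt (l₁ * l₂)) /
      (Real.sqrt (1 + ε₀) * (l₁ * (1 + ε₀) - l₂))) :
    βs ∈ Set.Ioo (ε₀ / (1 + ε₀)) 1 ∧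
      ∀ β ∈ Set.Ioo (ε₀ / (1 + ε₀)) 1, F βs ≤ F β := by
  have hε1 : (0:ℝ) < 1 + ε₀ := by linarith
  have hl₂ : 0 < l₂ := hl₁.trans hl₁₂
  set s := Real.sqrt (1 + ε₀) with hs_def
  set a := Real.sqrt l₁ with ha_def
  set b := Real.sqrt l₂ with hb_def
  have hs0 : 0 < s := Real.sqrt_pos.mpr hε1
  have ha0 : 0 < a := Real.sqrt_pos.mpr hl₁
  have hb0 : 0 < b := Real.sqrt_pos.mpr hl₂
  have hs2 : s ^ 2 = 1 + ε₀ := Real.sq_sqrt hε1.le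
  have ha2 : a ^ 2 = l₁ := Real.sq_sqrt hl₁.le
  have hb2 : b ^ 2 = l₂ := Real.sq_sqrt hl₂.le
  have hab : Real.sqrt (l₁ * l₂) = a * b := Real.sqrt_mul hl₁.le l₂
  have hs1 : 1 ≤ s := by nlinarith
  have hab' : a < b := by nlinarith
  have hasb : a * s ≠ b := by
    intro h
    apply hne
    have h2 : (a * s) ^ 2 = b ^ 2 := by rw [h]
    nlinarith
  have hT0 : 0 < a * s + b := by positivity
  have hasb' : a * s - b ≠ 0 := sub_ne_zero.mpr hasb
  have hε : ε₀ = s ^ 2 - 1 := by rw [hs2]; ring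
  -- closed form for βs in terms of a, b, s
  have hβs' : βs = (ε₀ + b / (a * s + b)) / (1 + ε₀) := by
    rw [hβs, hab, ← ha2, ← hb2, ← hs2, hε]
    have hd : s * (a ^ 2 * s ^ 2 - b ^ 2) ≠ 0 := by
      intro h
      rcases mul_eq_zero.mp h with h | h
      · exact hs0.ne' h
      · have : (a * s - b) * (a * s + b) = 0 := by nlinarith
        rcases mul_eq_zero.mp this with h' | h'
        · exact hasb' h'
        · exact (hT0.ne' h')
    have hd' : s ^ 2 - 1 + 1 ≠ 0 := by
      have : s ^ 2 - 1 + 1 = s ^ 2 := by ring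
      rw [this]; positivity
    have hd2 : s ^ 2 * a ^ 2 - b ^ 2 ≠ 0 := by
      intro h; apply hd; rw [show a ^ 2 * s ^ 2 - b ^ 2 = s ^ 2 * a ^ 2 - b ^ 2 by ring, h, mul_zero]
    field_simp
    ring
  -- the key substituted variable at βs
  have hus : βs - (1 - βs) * ε₀ = b / (a * s + b) := by
    rw [hβs']
    field_simp
    ring
  have hvs : 1 - βs = a / ((a * s + b) * s) := by
    rw [hβs', hε]
    have hd' : s ^ 2 - 1 + 1 ≠ 0 := by
      have : s ^ 2 - 1 + 1 = s ^ 2 := by ring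
      rw [this]; positivity
    field_simp
    ring
  have hts0 : 0 < b / (a * s + b) := by positivity
  have hts1 : b / (a * s + b) < 1 := (div_lt_one hT0).mpr (by nlinarith)
  -- membership
  have hmem : βs ∈ Set.Ioo (ε₀ / (1 + ε₀)) 1 := by
    constructor
    · rw [hβs']
      gcongr
      linarith
    · rw [hβs', div_lt_one hε1]
      linarith
  refine ⟨hmem, ?_⟩
  -- lower bound for the exponent on the whole interval
  have key : ∀ β ∈ Set.Ioo (ε₀ / (1 + ε₀)) 1,
      ε₀ / ρ * (b + a * s) ^ 2 ≤ l₂ * A β + l₁ * max (A β) (B β) := by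
    intro β hβ
    have hβ1 : ε₀ < β * (1 + ε₀) := by
      have := hβ.1
      rw [div_lt_iff₀ hε1] at this
      linarith
    have hu : 0 < β - (1 - β) * ε₀ := by nlinarith
    have hv : 0 < 1 - β := by linarith [hβ.2]
    have hw : 0 < (1 + ε₀) * (1 - β) := by positivity
    have huw : (β - (1 - β) * ε₀) + (1 + ε₀) * (1 - β) = 1 := by ring
    have h1 := noma_basic_ineq (β - (1 - β) * ε₀) ((1 + ε₀) * (1 - β)) b (a * s) hu hw huw
    have h2 : l₂ * A β + l₁ * B β =
        ε₀ / ρ * (b ^ 2 / (β - (1 - β) * ε₀) + (a * s) ^ 2 / ((1 + ε₀) * (1 - β))) := by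
      rw [hA, hB, ← ha2, ← hb2]
      have hmp : (a * s) ^ 2 = a ^ 2 * (1 + ε₀) := by rw [mul_pow, hs2]
      rw [hmp]
      field_simp
    have h3 : B β ≤ max (A β) (B β) := le_max_right _ _
    have h4 : ε₀ / ρ * (b + a * s) ^ 2 ≤ l₂ * A β + l₁ * B β := by
      rw [h2]
      have hpos : (0:ℝ) ≤ ε₀ / ρ := by positivity
      exact mul_le_mul_of_nonneg_left h1 hpos
    have h5 : l₁ * B β ≤ l₁ * max (A β) (B β) := mul_le_mul_of_nonneg_left h3 hl₁.le
    linarith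
  -- at βs, the exponent equals the lower bound
  have hABs : A βs ≤ B βs := by
    rw [hA, hB, hus, hvs]
    have hq : a / ((a * s + b) * s) ≤ b / (a * s + b) := by
      rw [div_le_div_iff₀ (by positivity) hT0]
      have hbs : a < b * s := by nlinarith
      nlinarith [mul_pos hT0 (sub_pos.mpr hbs)]
    rw [div_le_div_iff₀ (by positivity) (by positivity)]
    nlinarith [mul_le_mul_of_nonneg_left hq (by positivity : (0:ℝ) ≤ ε₀ * ρ)]
  have hGs : l₂ * A βs + l₁ * B βs = ε₀ / ρ * (b + a * s) ^ 2 := by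
    rw [hA, hB, hus, hvs, ← ha2, ← hb2]
    field_simp
    ring
  intro β hβ
  rw [hF βs, hF β]
  have h1 : l₂ * A βs + l₁ * max (A βs) (B βs) ≤ l₂ * A β + l₁ * max (A β) (B β) := by
    rw [max_eq_right hABs, hGs]
    exact key β hβ
  have h2 := Real.exp_le_exp.mpr (neg_le_neg h1)
  linarith
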